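/- Let k and ℓ be integers with 3 ≤ k ≤ ℓ and let H_{k,ℓ} be the graph described in the context. Then for every choice of vertices x_i ∈ {t_{i,1}, t_{i,2}} for i = 1,…,k−1, the set {v, x_1,…,x_{k−1}} is a total dominating set of H_{k,ℓ} of cardinality k; moreover, for every choice of vertices x_i ∈ {t_{i,1}, t_{i,2}} for i = k,…,k+ℓ−2, the set {w, x_k,…,x_{k+ℓ−2}} is a total dominating set of H_{k,ℓ} of cardinality ℓ. -/
import Mathlib


/-- The three special vertices `u`, `v`, `w`. -/
inductive UVW : Type
  | u | v | w
deriving DecidableEq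

/-- Vertices of `H_{k,ℓ}`: triangle vertices `t_{i,j}` as `Sum.inl (i,j)`
(0-indexed, `i : Fin (k+ℓ-2)`, `j : Fin 3`), plus `u`, `v`, `w`. -/
abbrev HklV (k l : ℕ) := (Fin (k + l - 2) × Fin 3) ⊕ UVW

/-- Edge relation of `H_{k,ℓ}`: triangles on each `t_{i,·}`; the edge `uv`;
`u` adjacent to `t_{i,1}` (0-indexed `j = 0`) for all `i` and to `t_{i,2}`,
`t_{i,3}` for `i ≥ k` (0-indexed `k-1 ≤ i.val`); `v` adjacent to `t_{i,1}`,
`t_{i,2}` for all `i` and to `t_{i,3}` for `i ≥ k`; `w` adjacent to `t_{i,1}`,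
`t_{i,2}` for all `i` and to `t_{i,3}` for `i ≤ k-1` (0-indexed
`i.val < k-1`); `w` adjacent to neither `u` nor `v`. -/
def HklRel (k l : ℕ) : HklV k l → HklV k l → Prop
  | .inl p, .inl q => p.1 = q.1
  | .inr .u, .inl p =>
      p.2.val = 0 ∨ (k - 1 ≤ p.1.val ∧ (p.2.val = 1 ∨ p.2.val = 2))
  | .inr .v, .inl p =>
      p.2.val = 0 ∨ p.2.val = 1 ∨ (k - 1 ≤ p.1.val ∧ p.2.val = 2)
  | .inr .w, .inl p =>
      p.2.val = 0 ∨ p.2.val = 1 ∨ (p.1.val < k - 1 ∧ p.2.val = 2)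
  | .inr .u, .inr .v => True
  | _, _ => False

/-- The graph `H_{k,ℓ}`. -/
def Hkl (k l : ℕ) : SimpleGraph (HklV k l) := SimpleGraph.fromRel (HklRel k l)

/-- `D` is a total dominating set of `G`. -/
def IsTotalDomSet {V : Type*} (G : SimpleGraph V) (D : Finset V) : Prop :=
  ∀ v : V, ∃ d ∈ D, G.Adj v d

lemma hkl_adj {k l : ℕ} {a b : HklV k l} (h : a ≠ b)
    (hr : HklRel k l a b ∨ HklRel k l b a) : (Hkl k l).Adj a b :=
  (SimpleGraph.fromRel_adj _ _ _).mpr ⟨h, hr⟩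

lemma card_filter_lt (n m : ℕ) (h : m ≤ n) :
    (Finset.univ.filter fun i : Fin n => i.val < m).card = m := by
  have : (Finset.univ.filter fun i : Fin n => i.val < m)
      = Finset.map ⟨Fin.castLE h, Fin.castLE_injective h⟩ Finset.univ := by
    ext i
    simp only [Finset.mem_filter, Finset.mem_univ, true_and, Finset.mem_map,
      Function.Embedding.coeFn_mk]
    constructor
    · intro hi; exact ⟨⟨i.val, hi⟩, Fin.ext rfl⟩
    · rintro ⟨j, rfl⟩; exact j.isLt
  rw [this]; simp

lemma card_filter_ge (n m : ℕ) (h : m ≤ n) :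
    (Finset.univ.filter fun i : Fin n => m ≤ i.val).card = n - m := by
  have h1 := Finset.card_filter_add_card_filter_not
    (s := (Finset.univ : Finset (Fin n))) (p := fun i : Fin n => i.val < m)
  have h2 := card_filter_lt n m h
  have h3 : (Finset.univ.filter fun i : Fin n => ¬ i.val < m)
      = Finset.univ.filter fun i : Fin n => m ≤ i.val := by
    simp [not_lt]
  rw [h3] at h1
  simp only [Finset.card_univ, Fintype.card_fin] at h1
  omega

/-- For every choice `x_i ∈ {t_{i,1}, t_{i,2}}` for `i = 1, …, k-1` (0-indexed
`i.val < k-1`), the set `{v, x_1, …, x_{k-1}}` is a total dominating set of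
`H_{k,ℓ}` of cardinality `k`; and for every choice `x_i ∈ {t_{i,1}, t_{i,2}}`
for `i = k, …, k+ℓ-2` (0-indexed `k-1 ≤ i.val`), the set
`{w, x_k, …, x_{k+ℓ-2}}` is a total dominating set of `H_{k,ℓ}` of
cardinality `ℓ`. -/
theorem stmt16 (k l : ℕ) (hk : 3 ≤ k) (hkl : k ≤ l) :
    (∀ (c : Fin (k + l - 2) → Fin 3),
      (∀ i, i.val < k - 1 → (c i).val = 0 ∨ (c i).val = 1) →
      ∀ D : Finset (HklV k l),
        D = insert (Sum.inr UVW.v)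
          (Finset.image (fun i => Sum.inl (i, c i))
            (Finset.univ.filter (fun i : Fin (k + l - 2) => i.val < k - 1))) →
        IsTotalDomSet (Hkl k l) D ∧ D.card = k) ∧
    (∀ (c : Fin (k + l - 2) → Fin 3),
      (∀ i, k - 1 ≤ i.val → (c i).val = 0 ∨ (c i).val = 1) →
      ∀ D : Finset (HklV k l),
        D = insert (Sum.inr UVW.w)
          (Finset.image (fun i => Sum.inl (i, c i))
            (Finset.univ.filter (fun i : Fin (k + l - 2) => k - 1 ≤ i.val))) →
        IsTotalDomSet (Hkl k l) D ∧ D.card = l) := by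
  have hn : k - 1 ≤ k + l - 2 := by omega
  have hinj : ∀ c : Fin (k + l - 2) → Fin 3,
      Function.Injective (fun i => (Sum.inl (i, c i) : HklV k l)) := by
    intro c a b h
    have := Sum.inl.inj h
    exact (Prod.ext_iff.mp this).1
  constructor
  · intro c hc D hD
    subst hD
    constructor
    · intro x
      match x with
      | Sum.inl (i, j) =>
        by_cases hik : i.val < k - 1
        · by_cases hj : j = c i
          · refine ⟨Sum.inr UVW.v, Finset.mem_insert_self _ _, ?_⟩
            refine hkl_adj (by simp) (Or.inr ?_)
            show j.val = 0 ∨ j.val = 1 ∨ _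
            subst hj
            rcases hc i hik with h0 | h1
            · exact Or.inl h0
            · exact Or.inr (Or.inl h1)
          · refine ⟨Sum.inl (i, c i), Finset.mem_insert_of_mem
              (Finset.mem_image.mpr ⟨i, by simp [hik], rfl⟩), ?_⟩
            exact hkl_adj (by simp [hj]) (Or.inl rfl)
        · refine ⟨Sum.inr UVW.v, Finset.mem_insert_self _ _, ?_⟩
          refine hkl_adj (by simp) (Or.inr ?_)
          show j.val = 0 ∨ j.val = 1 ∨ (k - 1 ≤ i.val ∧ j.val = 2)
          have hj3 := j.isLt
          have hik' : k - 1 ≤ i.val := le_of_not_gt hik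
          rcases (by omega : j.val = 0 ∨ j.val = 1 ∨ j.val = 2) with h | h | h
          · exact Or.inl h
          · exact Or.inr (Or.inl h)
          · exact Or.inr (Or.inr ⟨hik', h⟩)
      | Sum.inr UVW.u =>
        exact ⟨Sum.inr UVW.v, Finset.mem_insert_self _ _,
          hkl_adj (by simp) (Or.inl trivial)⟩
      | Sum.inr UVW.v =>
        refine ⟨Sum.inl (⟨0, by omega⟩, c ⟨0, by omega⟩), Finset.mem_insert_of_mem
          (Finset.mem_image.mpr ⟨⟨0, by omega⟩, by simp; omega, rfl⟩), ?_⟩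
        refine hkl_adj (by simp) (Or.inl ?_)
        show (c ⟨0, by omega⟩).val = 0 ∨ (c ⟨0, by omega⟩).val = 1 ∨ _
        rcases hc ⟨0, by omega⟩ (by simp; omega) with h | h
        · exact Or.inl h
        · exact Or.inr (Or.inl h)
      | Sum.inr UVW.w =>
        refine ⟨Sum.inl (⟨0, by omega⟩, c ⟨0, by omega⟩), Finset.mem_insert_of_mem
          (Finset.mem_image.mpr ⟨⟨0, by omega⟩, by simp; omega, rfl⟩), ?_⟩
        refine hkl_adj (by simp) (Or.inl ?_)
        show (c ⟨0, by omega⟩).val = 0 ∨ (c ⟨0, by omega⟩).val = 1 ∨ _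
        rcases hc ⟨0, by omega⟩ (by simp; omega) with h | h
        · exact Or.inl h
        · exact Or.inr (Or.inl h)
    · rw [Finset.card_insert_of_notMem (by simp),
        Finset.card_image_of_injective _ (hinj c), card_filter_lt _ _ hn]
      omega
  · intro c hc D hD
    subst hD
    constructor
    · intro x
      match x with
      | Sum.inl (i, j) =>
        by_cases hik : k - 1 ≤ i.val
        · by_cases hj : j = c i
          · refine ⟨Sum.inr UVW.w, Finset.mem_insert_self _ _, ?_⟩
            refine hkl_adj (by simp) (Or.inr ?_)
            show j.val = 0 ∨ j.val = 1 ∨ _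
            subst hj
            rcases hc i hik with h0 | h1
            · exact Or.inl h0
            · exact Or.inr (Or.inl h1)
          · refine ⟨Sum.inl (i, c i), Finset.mem_insert_of_mem
              (Finset.mem_image.mpr ⟨i, by simp; omega, rfl⟩), ?_⟩
            exact hkl_adj (by simp [hj]) (Or.inl rfl)
        · refine ⟨Sum.inr UVW.w, Finset.mem_insert_self _ _, ?_⟩
          refine hkl_adj (by simp) (Or.inr ?_)
          show j.val = 0 ∨ j.val = 1 ∨ (i.val < k - 1 ∧ j.val = 2)
          have hj3 := j.isLt
          have hik' : i.val < k - 1 := lt_of_not_ge hik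
          rcases (by omega : j.val = 0 ∨ j.val = 1 ∨ j.val = 2) with h | h | h
          · exact Or.inl h
          · exact Or.inr (Or.inl h)
          · exact Or.inr (Or.inr ⟨hik', h⟩)
      | Sum.inr UVW.u =>
        refine ⟨Sum.inl (⟨k - 1, by omega⟩, c ⟨k - 1, by omega⟩), Finset.mem_insert_of_mem
          (Finset.mem_image.mpr ⟨⟨k - 1, by omega⟩, by simp; omega, rfl⟩), ?_⟩
        refine hkl_adj (by simp) (Or.inl ?_)
        show (c ⟨k - 1, by omega⟩).val = 0 ∨ (k - 1 ≤ k - 1 ∧ _)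
        rcases hc ⟨k - 1, by omega⟩ (by simp) with h | h
        · exact Or.inl h
        · exact Or.inr ⟨le_refl _, Or.inl h⟩
      | Sum.inr UVW.v =>
        refine ⟨Sum.inl (⟨k - 1, by omega⟩, c ⟨k - 1, by omega⟩), Finset.mem_insert_of_mem
          (Finset.mem_image.mpr ⟨⟨k - 1, by omega⟩, by simp; omega, rfl⟩), ?_⟩
        refine hkl_adj (by simp) (Or.inl ?_)
        show (c ⟨k - 1, by omega⟩).val = 0 ∨ (c ⟨k - 1, by omega⟩).val = 1 ∨ _
        rcases hc ⟨k - 1, by omega⟩ (by simp) with h | h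
        · exact Or.inl h
        · exact Or.inr (Or.inl h)
      | Sum.inr UVW.w =>
        refine ⟨Sum.inl (⟨k - 1, by omega⟩, c ⟨k - 1, by omega⟩), Finset.mem_insert_of_mem
          (Finset.mem_image.mpr ⟨⟨k - 1, by omega⟩, by simp; omega, rfl⟩), ?_⟩
        refine hkl_adj (by simp) (Or.inl ?_)
        show (c ⟨k - 1, by omega⟩).val = 0 ∨ (c ⟨k - 1, by omega⟩).val = 1 ∨ _
        rcases hc ⟨k - 1, by omega⟩ (by simp) with h | h
        · exact Or.inl h
        · exact Or.inr (Or.inl h)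
    · rw [Finset.card_insert_of_notMem (by simp),
        Finset.card_image_of_injective _ (hinj c), card_filter_ge _ _ hn]
      omega
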